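/- Let X be a finite set, Θ ⊆ ℝ^k open, and θ ↦ p_θ a twice continuously differentiable family of strictly positive probability distributions on X. Let F : (0,∞) → (0,∞) be such that x ↦ F(p_θ(x)) is a strictly positive probability distribution on X for every θ, and suppose the escort model is exponential: log F(p_θ(x)) = c(x) + ∑_{i=1}^k θ_i h_i(x) − ψ(θ) for functions c, h_1, …, h_k : X → ℝ and a twice continuously differentiable ψ : Θ → ℝ. Set η_i(θ) := E_{F(p_θ)}[h_i]. Then: (i) ∂_i ψ(θ) = η_i(θ); (ii) the generalized Fisher matrix satisfies g^{(f,F)}_{ij}(θ) = E_{F(p_θ)}[(h_i − η_i(θ))(h_j − η_j(θ))], i.e. G^{(f,F)}(θ) = Cov_{F(p_θ)}[h]; and (iii) ∂_i η_j(θ) = g^{(f,F)}_{ij}(θ). In particular h = (h_1, …, h_k) is an unbiased estimator of η(θ) for the escort model whose covariance matrix equals the generalized Fisher matrix, i.e. it is efficient. -/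

import Mathlib

open scoped BigOperators Topology Matrix
open Real MeasureTheory

noncomputable section

/-- Expectation of `A` under the weight/distribution `p` on a finite set. -/
def expct {X : Type*} [Fintype X] (p A : X → ℝ) : ℝ := ∑ x, p x * A x

/-- Covariance of `A` and `B` under `p`. -/
def covf {X : Type*} [Fintype X] (p A B : X → ℝ) : ℝ :=
  (∑ x, p x * A x * B x) - (∑ x, p x * A x) * (∑ x, p x * B x)

/-- Variance of `A` under `p`: `E_p[(A - E_p A)^2]`. -/
def varE {X : Type*} [Fintype X] (p A : X → ℝ) : ℝ :=
  ∑ x, p x * (A x - expct p A) ^ 2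

/-- The α-escort distribution of `p`. -/
def escort {X : Type*} [Fintype X] (α : ℝ) (p : X → ℝ) : X → ℝ :=
  fun x => p x ^ α / ∑ y, p y ^ α

/-- Partial derivative in the `i`-th coordinate direction. -/
def pderiv {m : ℕ} (i : Fin m) (f : (Fin m → ℝ) → ℝ) (θ : Fin m → ℝ) : ℝ :=
  fderiv ℝ f θ (Pi.single i 1)

/-- Covariance matrix of a vector-valued map `A` under `p`. -/
def covMatrix {X : Type*} [Fintype X] {m : ℕ} (p : X → ℝ) (A : X → Fin m → ℝ) :
    Matrix (Fin m) (Fin m) ℝ :=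
  Matrix.of fun i j => covf p (fun x => A x i) (fun x => A x j)

/-- The α-information matrix `G^{(α)}(θ)`. -/
def Galpha {X : Type*} [Fintype X] {m : ℕ} (α : ℝ) (p : (Fin m → ℝ) → X → ℝ)
    (θ : Fin m → ℝ) : Matrix (Fin m) (Fin m) ℝ :=
  Matrix.of fun i j =>
    covf (escort α (p θ)) (fun x => pderiv i (fun t => Real.log (p t x)) θ)
      (fun x => pderiv j (fun t => Real.log (p t x)) θ)

/-- The I_α-divergence (relative α-entropy). -/
def Ialpha {X : Type*} [Fintype X] (α : ℝ) (p q : X → ℝ) : ℝ :=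
  (1 / (1 - α)) * Real.log (∑ x, p x * q x ^ (α - 1))
    + (1 / α) * Real.log (∑ x, q x ^ α)
    - (1 / (α * (1 - α))) * Real.log (∑ x, p x ^ α)

/-- Generalized KL-divergence between positive measures on a finite set. -/
def genKL {X : Type*} [Fintype X] (pt qt : X → ℝ) : ℝ :=
  ∑ x, pt x * Real.log (pt x / qt x) - ∑ x, pt x + ∑ x, qt x

/-- The Fisher information matrix `G^{(e)}(θ)`. -/
def GeMat {X : Type*} [Fintype X] {k : ℕ} (p : (Fin k → ℝ) → X → ℝ) (θ : Fin k → ℝ) :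
    Matrix (Fin k) (Fin k) ℝ :=
  Matrix.of fun i j =>
    ∑ x, p θ x * pderiv i (fun t => Real.log (p t x)) θ * pderiv j (fun t => Real.log (p t x)) θ

/-- The prior matrix `J^λ(θ)` with entries `∂_i log λ · ∂_j log λ`. -/
def Jmat {k : ℕ} (lam : (Fin k → ℝ) → ℝ) (θ : Fin k → ℝ) : Matrix (Fin k) (Fin k) ℝ :=
  Matrix.of fun i j =>
    pderiv i (fun t => Real.log (lam t)) θ * pderiv j (fun t => Real.log (lam t)) θ

/-- The generalized Fisher matrix `G^{(f,F)}(θ)` of the escort model. -/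
def GFF {X : Type*} [Fintype X] {k : ℕ} (F : ℝ → ℝ) (p : (Fin k → ℝ) → X → ℝ)
    (θ : Fin k → ℝ) : Matrix (Fin k) (Fin k) ℝ :=
  Matrix.of fun i j =>
    ∑ x, F (p θ x) * pderiv i (fun t => Real.log (F (p t x))) θ
      * pderiv j (fun t => Real.log (F (p t x))) θ

/-- The generalized f-divergence `D_f^{(F)}(p,q)`. -/
def genDiv {X : Type*} [Fintype X] (f F : ℝ → ℝ) (p q : X → ℝ) : ℝ :=
  (1 / deriv (deriv f) 1) * ∑ x, F (q x) * f (F (p x) / F (q x))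

/-- The Bayesian I_α-divergence between `λ·p` and `μ·q`. -/
def IalphaB {X : Type*} [Fintype X] (α lam mu : ℝ) (p q : X → ℝ) : ℝ :=
  lam * Ialpha α p q + lam * Real.log (lam / mu) - lam + mu

/-- The open-simplex parametrization of distributions on a set with `d+1` points. -/
def simplexFam (d : ℕ) (θ : Fin d → ℝ) : Fin (d + 1) → ℝ :=
  fun x => if h : (x : ℕ) < d then θ ⟨x, h⟩ else 1 - ∑ i, θ i

/-- for an exponential escort model, `h` is an efficient (unbiased,
covariance = generalized Fisher matrix) estimator of the dual parameter `η`. -/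
theorem exponential_escort_efficient {X : Type*} [Fintype X] {k : ℕ}
    (Θ : Set (Fin k → ℝ)) (hΘ : IsOpen Θ)
    (p : (Fin k → ℝ) → X → ℝ)
    (hsmooth : ∀ x, ContDiffOn ℝ 2 (fun θ => p θ x) Θ)
    (hpos : ∀ θ ∈ Θ, ∀ x, 0 < p θ x)
    (hsum : ∀ θ ∈ Θ, ∑ x, p θ x = 1)
    (F : ℝ → ℝ)
    (hFpos : ∀ θ ∈ Θ, ∀ x, 0 < F (p θ x))
    (hFsum : ∀ θ ∈ Θ, ∑ x, F (p θ x) = 1)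
    (c : X → ℝ) (h : Fin k → X → ℝ) (ψ : (Fin k → ℝ) → ℝ)
    (hψ : ContDiffOn ℝ 2 ψ Θ)
    (hexp : ∀ θ ∈ Θ, ∀ x,
      Real.log (F (p θ x)) = c x + (∑ i, θ i * h i x) - ψ θ) :
    ∀ θ ∈ Θ,
      (∀ i, pderiv i ψ θ = ∑ x, F (p θ x) * h i x) ∧
      (∀ i j, GFF F p θ i j
        = ∑ x, F (p θ x) * (h i x - ∑ y, F (p θ y) * h i y)
            * (h j x - ∑ y, F (p θ y) * h j y)) ∧
      (∀ i j, pderiv i (fun t => ∑ x, F (p t x) * h j x) θ = GFF F p θ i j) ∧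
      covMatrix (fun x => F (p θ x)) (fun x r => h r x) = GFF F p θ := by
  
  intro θ hθ
  have hmem : Θ ∈ nhds θ := hΘ.mem_nhds hθ
  have hψd : DifferentiableAt ℝ ψ θ :=
    (hψ.differentiableOn (by norm_num)).differentiableAt hmem
  set Dψ := fderiv ℝ ψ θ with hDψ
  set Lin : X → (Fin k → ℝ) →L[ℝ] ℝ :=
    fun x => ∑ i, (h i x) • (ContinuousLinearMap.proj i) with hLinDef
  have hLin : ∀ x t, Lin x t = ∑ i, t i * h i x := by
    intro x t
    simp [hLinDef, ContinuousLinearMap.sum_apply, mul_comm]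
  have hLinSingle : ∀ x i, Lin x (Pi.single i 1) = h i x := by
    intro x i
    rw [hLin]
    simp [Pi.single_apply]
  set L : X → (Fin k → ℝ) → ℝ := fun x t => c x + (∑ i, t i * h i x) - ψ t with hL
  have hLd : ∀ x, HasFDerivAt (L x) (Lin x - Dψ) θ := by
    intro x
    have h1 : HasFDerivAt (fun t : Fin k → ℝ => ∑ i, t i * h i x) (Lin x) θ := by
      have e : (fun t : Fin k → ℝ => ∑ i, t i * h i x) = ⇑(Lin x) :=
        funext fun t => (hLin x t).symm
      rw [e]; exact (Lin x).hasFDerivAt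
    have := ((hasFDerivAt_const (c x) θ).add h1).sub hψd.hasFDerivAt
    rw [zero_add] at this
    exact this
  have hFeq : ∀ x, (fun t => F (p t x)) =ᶠ[nhds θ] fun t => Real.exp (L x t) := by
    intro x
    filter_upwards [hmem] with t ht
    rw [← Real.exp_log (hFpos t ht x), hexp t ht x]
  have hFd : ∀ x, HasFDerivAt (fun t => F (p t x)) (F (p θ x) • (Lin x - Dψ)) θ := by
    intro x
    have h1 : HasFDerivAt (fun t => Real.exp (L x t)) (Real.exp (L x θ) • (Lin x - Dψ)) θ :=
      (hLd x).exp
    have h2 : Real.exp (L x θ) = F (p θ x) := ((hFeq x).self_of_nhds).symm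
    rw [h2] at h1
    exact h1.congr_of_eventuallyEq (hFeq x)
  have keylog : ∀ i x, pderiv i (fun t => Real.log (F (p t x))) θ = h i x - Dψ (Pi.single i 1) := by
    intro i x
    have heq : (fun t => Real.log (F (p t x))) =ᶠ[nhds θ] L x := by
      filter_upwards [hmem] with t ht
      exact hexp t ht x
    have : fderiv ℝ (fun t => Real.log (F (p t x))) θ = Lin x - Dψ := by
      rw [heq.fderiv_eq, (hLd x).fderiv]
    simp only [pderiv, this, ContinuousLinearMap.sub_apply, hLinSingle]
  -- Part (i)
  have keyψ : ∀ i, Dψ (Pi.single i 1) = ∑ x, F (p θ x) * h i x := by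
    intro i
    have hsum' : HasFDerivAt (fun t => ∑ x, F (p t x))
        (∑ x, F (p θ x) • (Lin x - Dψ)) θ := by
      refine HasFDerivAt.fun_sum ?_
      intro x _
      exact hFd x
    have h0 : HasFDerivAt (fun t => ∑ x, F (p t x)) (0 : (Fin k → ℝ) →L[ℝ] ℝ) θ := by
      refine (hasFDerivAt_const (1:ℝ) θ).congr_of_eventuallyEq ?_
      filter_upwards [hmem] with t ht
      exact hFsum t ht
    have huniq := h0.unique hsum'
    have happ : (0:ℝ) = ∑ x, F (p θ x) * (h i x - Dψ (Pi.single i 1)) := by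
      have := congrArg (fun (T : (Fin k → ℝ) →L[ℝ] ℝ) => T (Pi.single i 1)) huniq
      simpa [ContinuousLinearMap.sum_apply, ContinuousLinearMap.sub_apply,
        hLinSingle, smul_sub, smul_eq_mul, mul_sub] using this
    have hF1 := hFsum θ hθ
    have hexpand : ∑ x, F (p θ x) * (h i x - Dψ (Pi.single i 1))
        = (∑ x, F (p θ x) * h i x) - Dψ (Pi.single i 1) := by
      simp only [mul_sub]
      rw [Finset.sum_sub_distrib, ← Finset.sum_mul, hF1, one_mul]
    rw [hexpand] at happ
    linarith
  have hpd : ∀ i, pderiv i ψ θ = Dψ (Pi.single i 1) := fun i => rfl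
  set η : Fin k → ℝ := fun i => ∑ x, F (p θ x) * h i x with hη
  have keylog' : ∀ i x, pderiv i (fun t => Real.log (F (p t x))) θ = h i x - η i := by
    intro i x; rw [keylog, keyψ]
  have keyGFF : ∀ i j, GFF F p θ i j
      = ∑ x, F (p θ x) * (h i x - η i) * (h j x - η j) := by
    intro i j
    simp only [GFF, Matrix.of_apply]
    refine Finset.sum_congr rfl fun x _ => ?_
    rw [keylog', keylog']
  have hF1 := hFsum θ hθ
  have hexpand2 : ∀ i j, ∑ x, F (p θ x) * (h i x - η i) * (h j x - η j)
      = (∑ x, F (p θ x) * h i x * h j x) - η i * η j := by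
    intro i j
    have : ∀ x, F (p θ x) * (h i x - η i) * (h j x - η j)
        = F (p θ x) * h i x * h j x - η i * (F (p θ x) * h j x)
          - η j * (F (p θ x) * h i x) + η i * η j * F (p θ x) := by
      intro x; ring
    rw [Finset.sum_congr rfl fun x _ => this x]
    rw [Finset.sum_add_distrib, Finset.sum_sub_distrib, Finset.sum_sub_distrib,
      ← Finset.mul_sum, ← Finset.mul_sum, ← Finset.mul_sum, hF1, hη]
    ring
  refine ⟨fun i => by rw [hpd, keyψ], keyGFF, ?_, ?_⟩
  · -- part (iii)
    intro i j
    have hsum' : HasFDerivAt (fun t => ∑ x, F (p t x) * h j x)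
        (∑ x, (h j x) • (F (p θ x) • (Lin x - Dψ))) θ :=
      by
        refine HasFDerivAt.fun_sum ?_
        intro x _
        simpa [mul_comm] using (hFd x).mul_const (h j x)
    have : pderiv i (fun t => ∑ x, F (p t x) * h j x) θ
        = ∑ x, h j x * (F (p θ x) * (h i x - Dψ (Pi.single i 1))) := by
      simp [pderiv, hsum'.fderiv, ContinuousLinearMap.sum_apply,
        ContinuousLinearMap.sub_apply, hLinSingle, smul_sub, mul_sub]
    rw [this, keyGFF, hexpand2]
    have : ∀ x, h j x * (F (p θ x) * (h i x - Dψ (Pi.single i 1)))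
        = F (p θ x) * h i x * h j x - Dψ (Pi.single i 1) * (F (p θ x) * h j x) := by
      intro x; ring
    rw [Finset.sum_congr rfl fun x _ => this x, Finset.sum_sub_distrib,
      ← Finset.mul_sum, keyψ]
  · -- part (iv)
    ext i j
    simp only [covMatrix, covf, Matrix.of_apply]
    rw [keyGFF, hexpand2]
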